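/- Let 0 < r < R, let k ≥ 1 be a natural number, and let θ > 0 satisfy θ·(R − r) < 1. Then there exists X > 0 such that for every λ ∈ ℂ and every m ∈ ℕ with |λ| ≥ X and |Im λ| + m ≤ θ·ln(2 + |λ|), one has B(R, λ, k−1, m) · (|λ| + 1)^{k−1} · e^{R·|Im λ|} ≤ B(r, λ, k, m) · (|λ| + 1)^k · e^{r·|Im λ|}. -/

import Mathlib

open Complex Filter

/-- The weight `B(R, λ, q, m)` from the paper (it depends only on `R`, `q`, `m`). -/
noncomputable def Bwt (R : ℝ) (_lam : ℂ) (q m : ℕ) : ℝ :=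
  if R > 1 then R ^ m
  else if R = 1 then (m : ℝ) + 1
  else min ((q : ℝ) + 1) ((m : ℝ) + 1)

lemma one_le_Bwt (R : ℝ) (lam : ℂ) (q m : ℕ) : 1 ≤ Bwt R lam q m := by
  unfold Bwt
  split_ifs with h1 h2
  · exact one_le_pow₀ h1.le
  · linarith [Nat.cast_nonneg (α := ℝ) m]
  · refine le_min ?_ ?_ <;> linarith [Nat.cast_nonneg (α := ℝ) q, Nat.cast_nonneg (α := ℝ) m]

lemma Bwt_step (r R : ℝ) (hr : 0 < r) (hrR : r < R) (k m : ℕ) (lam : ℂ) :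
    Bwt R lam (k - 1) m ≤ Bwt r lam k m * ((k : ℝ) + m + 1) * Real.exp ((R - r) * m) := by
  have hBr := one_le_Bwt r lam k m
  have hexp1 : (1 : ℝ) ≤ Real.exp ((R - r) * m) := by
    rw [Real.one_le_exp_iff]
    exact mul_nonneg (by linarith) (Nat.cast_nonneg m)
  have hkm : (0 : ℝ) ≤ (k : ℝ) + m + 1 := by
    linarith [Nat.cast_nonneg (α := ℝ) k, Nat.cast_nonneg (α := ℝ) m]
  have hkm1 : (1 : ℝ) ≤ (k : ℝ) + m + 1 := by
    linarith [Nat.cast_nonneg (α := ℝ) k, Nat.cast_nonneg (α := ℝ) m]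
  by_cases hR : R > 1
  · -- Bwt R = R ^ m
    have hmain : R ^ m ≤ Bwt r lam k m * Real.exp ((R - r) * m) := by
      by_cases hr1 : r > 1
      · have hRr : R ≤ r * Real.exp (R - r) := by
          nlinarith [Real.add_one_le_exp (R - r)]
        have := pow_le_pow_left₀ (by linarith : (0:ℝ) ≤ R) hRr m
        rw [mul_pow, ← Real.exp_nat_mul] at this
        simp only [Bwt, if_pos hr1]
        calc R ^ m ≤ r ^ m * Real.exp ((m : ℝ) * (R - r)) := this
          _ = r ^ m * Real.exp ((R - r) * m) := by rw [mul_comm (m:ℝ)]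
      · have hRr : R ≤ Real.exp (R - r) := by
          push_neg at hr1
          nlinarith [Real.add_one_le_exp (R - r)]
        have := pow_le_pow_left₀ (by linarith : (0:ℝ) ≤ R) hRr m
        rw [← Real.exp_nat_mul] at this
        calc R ^ m ≤ Real.exp ((m : ℝ) * (R - r)) := this
          _ = 1 * Real.exp ((R - r) * m) := by rw [one_mul, mul_comm (m:ℝ)]
          _ ≤ Bwt r lam k m * Real.exp ((R - r) * m) := by
              gcongr
    calc Bwt R lam (k - 1) m = R ^ m := by simp [Bwt, hR]
      _ ≤ Bwt r lam k m * Real.exp ((R - r) * m) := hmain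
      _ = Bwt r lam k m * 1 * Real.exp ((R - r) * m) := by ring
      _ ≤ Bwt r lam k m * ((k : ℝ) + m + 1) * Real.exp ((R - r) * m) := by
          gcongr
  · -- Bwt R ≤ m + 1 ≤ k + m + 1
    have hupper : Bwt R lam (k - 1) m ≤ (k : ℝ) + m + 1 := by
      unfold Bwt
      rw [if_neg hR]
      split_ifs with h2
      · linarith [Nat.cast_nonneg (α := ℝ) k]
      · calc min ((↑(k-1) : ℝ) + 1) ((m : ℝ) + 1) ≤ (m : ℝ) + 1 := min_le_right _ _
          _ ≤ (k : ℝ) + m + 1 := by linarith [Nat.cast_nonneg (α := ℝ) k]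
    calc Bwt R lam (k - 1) m ≤ (k : ℝ) + m + 1 := hupper
      _ = 1 * ((k : ℝ) + m + 1) * 1 := by ring
      _ ≤ Bwt r lam k m * ((k : ℝ) + m + 1) * Real.exp ((R - r) * m) := by gcongr

theorem pointwise_weight_comparison (r R : ℝ) (hr : 0 < r) (hrR : r < R)
    (k : ℕ) (hk : 1 ≤ k) (θ : ℝ) (hθ : 0 < θ) (hθR : θ * (R - r) < 1) :
    ∃ X > (0 : ℝ), ∀ (lam : ℂ) (m : ℕ), X ≤ ‖lam‖ →
      |lam.im| + (m : ℝ) ≤ θ * Real.log (2 + ‖lam‖) →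
      Bwt R lam (k - 1) m * (‖lam‖ + 1) ^ (k - 1) * Real.exp (R * |lam.im|) ≤
      Bwt r lam k m * (‖lam‖ + 1) ^ k * Real.exp (r * |lam.im|) := by
  set c : ℝ := θ * (R - r) with hc_def
  have hc0 : 0 < c := by apply mul_pos hθ; linarith
  have hc1 : c < 1 := hθR
  -- asymptotic bound: eventually ((k+1) + θ log x) * x ^ c ≤ x / 2
  have hpow : Tendsto (fun x : ℝ => x ^ (c - 1)) atTop (nhds 0) := by
    have : c - 1 = -(1 - c) := by ring
    rw [this]
    exact tendsto_rpow_neg_atTop (by linarith)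
  have hlog : Tendsto (fun x : ℝ => Real.log x * x ^ (c - 1)) atTop (nhds 0) := by
    have h := ((isLittleO_log_rpow_atTop (by linarith : (0:ℝ) < 1 - c)).tendsto_div_nhds_zero)
    refine h.congr' ?_
    filter_upwards [eventually_gt_atTop (0 : ℝ)] with x hx
    rw [div_eq_mul_inv, ← Real.rpow_neg hx.le]
    ring_nf
  have hquot : Tendsto (fun x : ℝ => (((k : ℝ) + 1) + θ * Real.log x) * x ^ c / x) atTop
      (nhds 0) := by
    have h := (hpow.const_mul ((k : ℝ) + 1)).add (hlog.const_mul θ)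
    rw [show ((k:ℝ)+1) * 0 + θ * 0 = 0 by ring] at h
    refine h.congr' ?_
    filter_upwards [eventually_gt_atTop (0 : ℝ)] with x hx
    rw [Real.rpow_sub hx, Real.rpow_one]
    field_simp
  have hev : ∀ᶠ x : ℝ in atTop, (((k : ℝ) + 1) + θ * Real.log x) * x ^ c ≤ x / 2 := by
    have h := hquot.eventually (eventually_le_nhds (show (0:ℝ) < 1/2 by norm_num))
    filter_upwards [h, eventually_gt_atTop (0 : ℝ)] with x hx hx0
    rw [div_le_iff₀ hx0] at hx
    linarith
  obtain ⟨X0, hX0⟩ := eventually_atTop.mp hev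
  refine ⟨max X0 1, lt_of_lt_of_le one_pos (le_max_right _ _), ?_⟩
  intro lam m hX hlm
  set a : ℝ := ‖lam‖ with ha_def
  have ha1 : 1 ≤ a := le_trans (le_max_right _ _) hX
  have hL0 : (0 : ℝ) < 2 + a := by linarith
  have hlogL : 0 < Real.log (2 + a) := Real.log_pos (by linarith)
  have hE : (((k : ℝ) + 1) + θ * Real.log (2 + a)) * (2 + a) ^ c ≤ (2 + a) / 2 :=
    hX0 (2 + a) (by linarith [le_trans (le_max_left X0 1) hX])
  have him : (0 : ℝ) ≤ |lam.im| := abs_nonneg _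
  have hm0 : (0 : ℝ) ≤ (m : ℝ) := Nat.cast_nonneg m
  have hmle : (m : ℝ) ≤ θ * Real.log (2 + a) := by linarith
  -- key exponential bound
  have hexpc : Real.exp ((R - r) * ((m : ℝ) + |lam.im|)) ≤ (2 + a) ^ c := by
    rw [Real.rpow_def_of_pos hL0, Real.exp_le_exp]
    have h1 : (m : ℝ) + |lam.im| ≤ θ * Real.log (2 + a) := by linarith
    calc (R - r) * ((m : ℝ) + |lam.im|) ≤ (R - r) * (θ * Real.log (2 + a)) :=
          mul_le_mul_of_nonneg_left h1 (by linarith)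
      _ = Real.log (2 + a) * c := by rw [hc_def]; ring
  have hBr := one_le_Bwt r lam k m
  have hBr0 : (0 : ℝ) ≤ Bwt r lam k m := le_trans zero_le_one hBr
  have hstep := Bwt_step r R hr hrR k m lam
  have hfac : ((k : ℝ) + m + 1) * Real.exp ((R - r) * ((m : ℝ) + |lam.im|)) ≤ a + 1 := by
    calc ((k : ℝ) + m + 1) * Real.exp ((R - r) * ((m : ℝ) + |lam.im|))
        ≤ (((k : ℝ) + 1) + θ * Real.log (2 + a)) * (2 + a) ^ c := by
          apply mul_le_mul (by linarith) hexpc (Real.exp_nonneg _) (by linarith)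
      _ ≤ (2 + a) / 2 := hE
      _ ≤ a + 1 := by linarith
  have hkpow : (a + 1) ^ k = (a + 1) ^ (k - 1) * (a + 1) := by
    rw [← pow_succ, Nat.sub_add_cancel hk]
  have hpre : 0 ≤ Bwt r lam k m * (a + 1) ^ (k - 1) * Real.exp (r * |lam.im|) :=
    mul_nonneg (mul_nonneg hBr0 (by positivity)) (Real.exp_nonneg _)
  calc Bwt R lam (k - 1) m * (a + 1) ^ (k - 1) * Real.exp (R * |lam.im|)
      ≤ (Bwt r lam k m * ((k : ℝ) + m + 1) * Real.exp ((R - r) * m)) * (a + 1) ^ (k - 1) *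
          Real.exp (R * |lam.im|) := by
        gcongr
    _ = (Bwt r lam k m * (a + 1) ^ (k - 1) * Real.exp (r * |lam.im|)) *
          (((k : ℝ) + m + 1) * Real.exp ((R - r) * ((m : ℝ) + |lam.im|))) := by
        rw [show (R - r) * ((m : ℝ) + |lam.im|) = (R - r) * m + (R - r) * |lam.im| by ring,
          Real.exp_add, show R * |lam.im| = r * |lam.im| + (R - r) * |lam.im| by ring,
          Real.exp_add]
        ring
    _ ≤ (Bwt r lam k m * (a + 1) ^ (k - 1) * Real.exp (r * |lam.im|)) * (a + 1) :=
        mul_le_mul_of_nonneg_left hfac hpre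
    _ = Bwt r lam k m * (a + 1) ^ k * Real.exp (r * |lam.im|) := by rw [hkpow]; ring
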